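/- (Symmetry of the Jacobian of the cubic matching map) For every a ∈ ℝ^{N+1} and all ℓ, n ∈ {1,...,N}, the partial derivatives of the cubic matching map satisfy ∂_ℓ [C^m_N(a)]_n = ∂_n [C^m_N(a)]_ℓ, and for all n ∈ {1,...,N}, ∂_n [C^m_N(a)]_0 = 2·∂_0 [C^m_N(a)]_n. -/

import Mathlib

/-- Index map sending an integer `i` with `|i| ≤ N` to `|i| : Fin (N+1)`. -/
def matchIdx (N : ℕ) (i : ℤ) : Fin (N + 1) := ⟨min i.natAbs N, by omega⟩

/-- The cubic matching map `C^m_N : ℝ^{N+1} → ℝ^{N+1}`: component `n` is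
`∑_{i+j+k=n, -N ≤ i,j,k ≤ N} (-1)^{m(|i|+|j|-|k|-n)/2} a_{|i|} a_{|j|} a_{|k|}`. -/
noncomputable def cubicMatchF (m N : ℕ) (a : Fin (N + 1) → ℝ) : Fin (N + 1) → ℝ :=
  fun n =>
  ∑ p ∈ (Finset.Icc (-(N : ℤ)) (N : ℤ) ×ˢ Finset.Icc (-(N : ℤ)) (N : ℤ) ×ˢ
      Finset.Icc (-(N : ℤ)) (N : ℤ)).filter (fun p => p.1 + p.2.1 + p.2.2 = (n : ℤ)),
    (-1 : ℝ) ^ (((m : ℤ) * (|p.1| + |p.2.1| - |p.2.2| - (n : ℤ))) / 2) *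
      a (matchIdx N p.1) * a (matchIdx N p.2.1) * a (matchIdx N p.2.2)

namespace CMF

variable (m N : ℕ)

noncomputable def S (y : ℤ) : Finset (ℤ × ℤ × ℤ) :=
  (Finset.Icc (-(N : ℤ)) (N : ℤ) ×ˢ Finset.Icc (-(N : ℤ)) (N : ℤ) ×ˢ
      Finset.Icc (-(N : ℤ)) (N : ℤ)).filter (fun p => p.1 + p.2.1 + p.2.2 = y)


lemma mem_S {y : ℤ} {p : ℤ × ℤ × ℤ} : p ∈ S N y ↔
    (-(N:ℤ) ≤ p.1 ∧ p.1 ≤ N) ∧ (-(N:ℤ) ≤ p.2.1 ∧ p.2.1 ≤ N) ∧ (-(N:ℤ) ≤ p.2.2 ∧ p.2.2 ≤ N)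
      ∧ p.1 + p.2.1 + p.2.2 = y := by
  simp [S, Finset.mem_filter, Finset.mem_product, Finset.mem_Icc]
  tauto

noncomputable def coef (p : ℤ × ℤ × ℤ) (y : ℤ) : ℝ :=
  (-1 : ℝ) ^ (((m : ℤ) * (|p.1| + |p.2.1| - |p.2.2| - y)) / 2)

/-- explicit derivative CLM of one term -/
noncomputable def termD (a : Fin (N + 1) → ℝ) (c : ℝ) (i j k : Fin (N + 1)) :
    (Fin (N + 1) → ℝ) →L[ℝ] ℝ :=
  (c * a j * a k) • ContinuousLinearMap.proj i
    + (c * a i * a k) • ContinuousLinearMap.proj j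
    + (c * a i * a j) • ContinuousLinearMap.proj k

theorem term_hasFDerivAt (a : Fin (N + 1) → ℝ) (c : ℝ) (i j k : Fin (N + 1)) :
    HasFDerivAt (fun a : Fin (N + 1) → ℝ => c * a i * a j * a k) (termD N a c i j k) a := by
  have hi : HasFDerivAt (𝕜 := ℝ) (fun a : Fin (N + 1) → ℝ => a i)
      (ContinuousLinearMap.proj i) a := hasFDerivAt_apply (𝕜 := ℝ) i a
  have hj : HasFDerivAt (𝕜 := ℝ) (fun a : Fin (N + 1) → ℝ => a j)
      (ContinuousLinearMap.proj j) a := hasFDerivAt_apply (𝕜 := ℝ) j a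
  have hk : HasFDerivAt (𝕜 := ℝ) (fun a : Fin (N + 1) → ℝ => a k)
      (ContinuousLinearMap.proj k) a := hasFDerivAt_apply (𝕜 := ℝ) k a
  have h1 := (hi.const_mul c).mul hj
  have h2 : HasFDerivAt (fun a : Fin (N + 1) → ℝ => c * a i * a j * a k) _ a := h1.mul hk
  refine h2.congr_fderiv ?_
  ext v
  simp [termD, ContinuousLinearMap.proj_apply]
  ring

noncomputable def totalD (a : Fin (N + 1) → ℝ) : (Fin (N + 1) → ℝ) →L[ℝ] (Fin (N + 1) → ℝ) :=
  ContinuousLinearMap.pi fun n => ∑ p ∈ S N (n : ℤ),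
    termD N a (coef m p (n : ℤ)) (matchIdx N p.1) (matchIdx N p.2.1) (matchIdx N p.2.2)

theorem cubic_hasFDerivAt (a : Fin (N + 1) → ℝ) :
    HasFDerivAt (cubicMatchF m N) (totalD m N a) a := by
  rw [hasFDerivAt_pi']
  intro n
  have : (fun a => cubicMatchF m N a n) = fun a : Fin (N+1) → ℝ => ∑ p ∈ S N (n:ℤ),
      coef m p (n:ℤ) * a (matchIdx N p.1) * a (matchIdx N p.2.1) * a (matchIdx N p.2.2) := rfl
  rw [this]
  have h := HasFDerivAt.sum (u := S N (n:ℤ)) (x := a)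
    (A := fun p (a : Fin (N+1) → ℝ) =>
      coef m p (n:ℤ) * a (matchIdx N p.1) * a (matchIdx N p.2.1) * a (matchIdx N p.2.2))
    (A' := fun p => termD N a (coef m p (n:ℤ)) (matchIdx N p.1) (matchIdx N p.2.1) (matchIdx N p.2.2))
    (fun p _ => term_hasFDerivAt N a _ _ _ _)
  convert h using 1
  · ext x; simp [Finset.sum_apply]
  · rfl

theorem fderiv_cubic (a v : Fin (N + 1) → ℝ) (n : Fin (N + 1)) :
    fderiv ℝ (cubicMatchF m N) a v n = ∑ p ∈ S N (n : ℤ),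
      coef m p (n : ℤ) * (v (matchIdx N p.1) * a (matchIdx N p.2.1) * a (matchIdx N p.2.2)
        + a (matchIdx N p.1) * v (matchIdx N p.2.1) * a (matchIdx N p.2.2)
        + a (matchIdx N p.1) * a (matchIdx N p.2.1) * v (matchIdx N p.2.2)) := by
  rw [(cubic_hasFDerivAt m N a).fderiv]
  simp only [totalD, termD, ContinuousLinearMap.pi_apply, ContinuousLinearMap.sum_apply,
    ContinuousLinearMap.add_apply, ContinuousLinearMap.coe_smul', Pi.smul_apply,
    ContinuousLinearMap.proj_apply, smul_eq_mul]
  apply Finset.sum_congr rfl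
  intro p _
  ring


lemma negOne_zpow_neg (e : ℤ) : (-1:ℝ)^(-e) = (-1)^e := by
  rcases Int.even_or_odd e with h | h
  · rw [h.neg.neg_one_zpow, h.neg_one_zpow]
  · rw [h.neg.neg_one_zpow, h.neg_one_zpow]

/-- key sign fact: if D is even then (-1)^(m*D/2) = (-1)^(m*(-D)/2) -/
lemma coef_flip (D : ℤ) (hD : 2 ∣ D) :
    (-1:ℝ) ^ (((m:ℤ) * D) / 2) = (-1:ℝ) ^ (((m:ℤ) * (-D)) / 2) := by
  obtain ⟨d, rfl⟩ := hD
  have h1 : ((m:ℤ) * (2*d)) / 2 = m * d := by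
    rw [show (m:ℤ) * (2*d) = 2 * (m*d) by ring, Int.mul_ediv_cancel_left _ two_ne_zero]
  have h2 : ((m:ℤ) * (-(2*d))) / 2 = -(m * d) := by
    rw [show (m:ℤ) * (-(2*d)) = 2 * (-(m*d)) by ring, Int.mul_ediv_cancel_left _ two_ne_zero]
  rw [h1, h2, negOne_zpow_neg]

noncomputable def T1 (a : Fin (N + 1) → ℝ) (x y : ℤ) : ℝ :=
  ∑ p ∈ (S N y).filter (fun p => p.1 = x),
    coef m p y * (a (matchIdx N p.2.1) * a (matchIdx N p.2.2))

noncomputable def T2 (a : Fin (N + 1) → ℝ) (x y : ℤ) : ℝ :=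
  ∑ p ∈ (S N y).filter (fun p => p.2.1 = x),
    coef m p y * (a (matchIdx N p.1) * a (matchIdx N p.2.2))

noncomputable def T3 (a : Fin (N + 1) → ℝ) (x y : ℤ) : ℝ :=
  ∑ p ∈ (S N y).filter (fun p => p.2.2 = x),
    coef m p y * (a (matchIdx N p.1) * a (matchIdx N p.2.1))

lemma matchIdx_neg_mul (s t : ℤ) (hs : s = 1 ∨ s = -1) : matchIdx N (-s * t) = matchIdx N t := by
  rcases hs with rfl | rfl <;> simp [matchIdx]

lemma abs_smul_nonneg (s x : ℤ) (hs : s = 1 ∨ s = -1) (hx : 0 ≤ x) : |s * x| = x := by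
  rcases hs with rfl | rfl <;> simp [abs_of_nonneg hx, hx]

lemma T1_swap (a : Fin (N + 1) → ℝ) (s x y : ℤ) (hs : s = 1 ∨ s = -1)
    (hx : 0 ≤ x) (hxN : x ≤ N) (hy : 0 ≤ y) (hyN : y ≤ N) :
    T1 m N a (s * x) y = T1 m N a (s * y) x := by
  unfold T1
  refine Finset.sum_nbij' (i := fun p => (s*y, -s*p.2.2, -s*p.2.1))
    (j := fun p => (s*x, -s*p.2.2, -s*p.2.1)) ?_ ?_ ?_ ?_ ?_
  · intro p hp
    simp only [Finset.mem_filter, mem_S] at hp ⊢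
    obtain ⟨⟨h1, h2, h3, h4⟩, h5⟩ := hp
    rcases hs with rfl | rfl <;> constructor <;> simp_all <;> omega
  · intro p hp
    simp only [Finset.mem_filter, mem_S] at hp ⊢
    obtain ⟨⟨h1, h2, h3, h4⟩, h5⟩ := hp
    rcases hs with rfl | rfl <;> constructor <;> simp_all <;> omega
  · intro p hp
    simp only [Finset.mem_filter, mem_S] at hp
    obtain ⟨⟨h1, h2, h3, h4⟩, h5⟩ := hp
    obtain ⟨p1, p2, p3⟩ := p
    rcases hs with rfl | rfl <;> simp_all <;> omega
  · intro p hp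
    simp only [Finset.mem_filter, mem_S] at hp
    obtain ⟨⟨h1, h2, h3, h4⟩, h5⟩ := hp
    obtain ⟨p1, p2, p3⟩ := p
    rcases hs with rfl | rfl <;> simp_all <;> omega
  · intro p hp
    simp only [Finset.mem_filter, mem_S] at hp
    obtain ⟨⟨h1, h2, h3, h4⟩, h5⟩ := hp
    have e1 : matchIdx N (-s * p.2.2) = matchIdx N p.2.2 := matchIdx_neg_mul N s _ hs
    have e2 : matchIdx N (-s * p.2.1) = matchIdx N p.2.1 := matchIdx_neg_mul N s _ hs
    have habs : ∀ t : ℤ, |(-s) * t| = |t| := by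
      intro t; rcases hs with rfl | rfl <;> simp
    have hc : coef m p y = coef m (s*y, -s*p.2.2, -s*p.2.1) x := by
      unfold coef
      simp only
      rw [h5, abs_smul_nonneg s x hs hx, abs_smul_nonneg s y hs hy,
        show -s*p.2.2 = (-s)*p.2.2 by ring, show -s*p.2.1 = (-s)*p.2.1 by ring,
        habs, habs]
      have hpar : 2 ∣ (x + |p.2.1| - |p.2.2| - y) := by
        have hj := abs_choice p.2.1
        have hk := abs_choice p.2.2
        rcases hs with rfl | rfl <;> omega
      have := coef_flip m (x + |p.2.1| - |p.2.2| - y) hpar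
      rw [show y + |p.2.2| - |p.2.1| - x = -(x + |p.2.1| - |p.2.2| - y) by ring]
      exact this
    rw [hc, e1, e2]
    ring

lemma T2_swap (a : Fin (N + 1) → ℝ) (s x y : ℤ) (hs : s = 1 ∨ s = -1)
    (hx : 0 ≤ x) (hxN : x ≤ N) (hy : 0 ≤ y) (hyN : y ≤ N) :
    T2 m N a (s * x) y = T2 m N a (s * y) x := by
  unfold T2
  refine Finset.sum_nbij' (i := fun p => (-s*p.2.2, s*y, -s*p.1))
    (j := fun p => (-s*p.2.2, s*x, -s*p.1)) ?_ ?_ ?_ ?_ ?_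
  · intro p hp
    simp only [Finset.mem_filter, mem_S] at hp ⊢
    obtain ⟨⟨h1, h2, h3, h4⟩, h5⟩ := hp
    rcases hs with rfl | rfl <;> constructor <;> simp_all <;> omega
  · intro p hp
    simp only [Finset.mem_filter, mem_S] at hp ⊢
    obtain ⟨⟨h1, h2, h3, h4⟩, h5⟩ := hp
    rcases hs with rfl | rfl <;> constructor <;> simp_all <;> omega
  · intro p hp
    simp only [Finset.mem_filter, mem_S] at hp
    obtain ⟨⟨h1, h2, h3, h4⟩, h5⟩ := hp
    obtain ⟨p1, p2, p3⟩ := p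
    rcases hs with rfl | rfl <;> simp_all
  · intro p hp
    simp only [Finset.mem_filter, mem_S] at hp
    obtain ⟨⟨h1, h2, h3, h4⟩, h5⟩ := hp
    obtain ⟨p1, p2, p3⟩ := p
    rcases hs with rfl | rfl <;> simp_all
  · intro p hp
    simp only [Finset.mem_filter, mem_S] at hp
    obtain ⟨⟨h1, h2, h3, h4⟩, h5⟩ := hp
    have e1 : matchIdx N (-s * p.2.2) = matchIdx N p.2.2 := matchIdx_neg_mul N s _ hs
    have e2 : matchIdx N (-s * p.1) = matchIdx N p.1 := matchIdx_neg_mul N s _ hs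
    have habs : ∀ t : ℤ, |(-s) * t| = |t| := by
      intro t; rcases hs with rfl | rfl <;> simp
    have hc : coef m p y = coef m (-s*p.2.2, s*y, -s*p.1) x := by
      unfold coef
      simp only
      rw [h5, abs_smul_nonneg s x hs hx, abs_smul_nonneg s y hs hy,
        show -s*p.2.2 = (-s)*p.2.2 by ring, show -s*p.1 = (-s)*p.1 by ring,
        habs, habs]
      have hpar : 2 ∣ (|p.1| + x - |p.2.2| - y) := by
        have hj := abs_choice p.1
        have hk := abs_choice p.2.2
        rcases hs with rfl | rfl <;> omega
      have := coef_flip m (|p.1| + x - |p.2.2| - y) hpar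
      rw [show |p.2.2| + y - |p.1| - x = -(|p.1| + x - |p.2.2| - y) by ring]
      exact this
    rw [hc, e1, e2]
    ring

lemma T3_swap (a : Fin (N + 1) → ℝ) (s x y : ℤ) (hs : s = 1 ∨ s = -1)
    (hx : 0 ≤ x) (hxN : x ≤ N) (hy : 0 ≤ y) (hyN : y ≤ N) :
    T3 m N a (s * x) y = T3 m N a (s * y) x := by
  unfold T3
  refine Finset.sum_nbij' (i := fun p => (-s*p.1, -s*p.2.1, s*y))
    (j := fun p => (-s*p.1, -s*p.2.1, s*x)) ?_ ?_ ?_ ?_ ?_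
  · intro p hp
    simp only [Finset.mem_filter, mem_S] at hp ⊢
    obtain ⟨⟨h1, h2, h3, h4⟩, h5⟩ := hp
    rcases hs with rfl | rfl <;> constructor <;> simp_all <;> omega
  · intro p hp
    simp only [Finset.mem_filter, mem_S] at hp ⊢
    obtain ⟨⟨h1, h2, h3, h4⟩, h5⟩ := hp
    rcases hs with rfl | rfl <;> constructor <;> simp_all <;> omega
  · intro p hp
    simp only [Finset.mem_filter, mem_S] at hp
    obtain ⟨⟨h1, h2, h3, h4⟩, h5⟩ := hp
    obtain ⟨p1, p2, p3⟩ := p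
    rcases hs with rfl | rfl <;> simp_all
  · intro p hp
    simp only [Finset.mem_filter, mem_S] at hp
    obtain ⟨⟨h1, h2, h3, h4⟩, h5⟩ := hp
    obtain ⟨p1, p2, p3⟩ := p
    rcases hs with rfl | rfl <;> simp_all
  · intro p hp
    simp only [Finset.mem_filter, mem_S] at hp
    obtain ⟨⟨h1, h2, h3, h4⟩, h5⟩ := hp
    have e1 : matchIdx N (-s * p.1) = matchIdx N p.1 := matchIdx_neg_mul N s _ hs
    have e2 : matchIdx N (-s * p.2.1) = matchIdx N p.2.1 := matchIdx_neg_mul N s _ hs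
    have habs : ∀ t : ℤ, |(-s) * t| = |t| := by
      intro t; rcases hs with rfl | rfl <;> simp
    have hc : coef m p y = coef m (-s*p.1, -s*p.2.1, s*y) x := by
      unfold coef
      simp only
      rw [h5, abs_smul_nonneg s x hs hx, abs_smul_nonneg s y hs hy,
        show -s*p.1 = (-s)*p.1 by ring, show -s*p.2.1 = (-s)*p.2.1 by ring,
        habs, habs]
      rw [show |p.1| + |p.2.1| - y - x = |p.1| + |p.2.1| - x - y by ring]
    rw [hc, e1, e2]


lemma sum_filter_matchIdx (y : ℤ) (q : ℤ × ℤ × ℤ → ℤ)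
    (hq : ∀ p ∈ S N y, -(N:ℤ) ≤ q p ∧ q p ≤ N) (l : Fin (N + 1)) (hl : l ≠ 0)
    (f : ℤ × ℤ × ℤ → ℝ) :
    ∑ p ∈ (S N y).filter (fun p => matchIdx N (q p) = l), f p
      = (∑ p ∈ (S N y).filter (fun p => q p = (l : ℤ)), f p)
        + ∑ p ∈ (S N y).filter (fun p => q p = -(l : ℤ)), f p := by
  have hlv : (l : ℕ) ≠ 0 := fun h => hl (Fin.ext (by simp [h]))
  have hcongr : (S N y).filter (fun p => matchIdx N (q p) = l)
      = (S N y).filter (fun p => q p = (l : ℤ) ∨ q p = -(l : ℤ)) := by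
    apply Finset.filter_congr
    intro p hp
    obtain ⟨hb1, hb2⟩ := hq p hp
    have hval : (matchIdx N (q p)).val = min (q p).natAbs N := rfl
    have hlN : (l : ℕ) ≤ N := by have := l.isLt; omega
    rw [Fin.ext_iff, hval]
    omega
  rw [hcongr, Finset.filter_or, Finset.sum_union]
  rw [Finset.disjoint_left]
  intro p hp1 hp2
  simp only [Finset.mem_filter] at hp1 hp2
  omega

lemma sum_filter_matchIdx_zero (y : ℤ) (q : ℤ × ℤ × ℤ → ℤ)
    (hq : ∀ p ∈ S N y, -(N:ℤ) ≤ q p ∧ q p ≤ N) (f : ℤ × ℤ × ℤ → ℝ) :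
    ∑ p ∈ (S N y).filter (fun p => matchIdx N (q p) = 0), f p
      = ∑ p ∈ (S N y).filter (fun p => q p = 0), f p := by
  congr 1
  apply Finset.filter_congr
  intro p hp
  obtain ⟨hb1, hb2⟩ := hq p hp
  have hval : (matchIdx N (q p)).val = min (q p).natAbs N := rfl
  rw [Fin.ext_iff, hval]
  simp only [Fin.val_zero]
  omega



lemma deriv_split (a : Fin (N + 1) → ℝ) (l n : Fin (N + 1)) :
    fderiv ℝ (cubicMatchF m N) a (Pi.single l 1) n =
      (∑ p ∈ (S N (n : ℤ)).filter (fun p => matchIdx N p.1 = l),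
        coef m p (n : ℤ) * (a (matchIdx N p.2.1) * a (matchIdx N p.2.2)))
      + (∑ p ∈ (S N (n : ℤ)).filter (fun p => matchIdx N p.2.1 = l),
        coef m p (n : ℤ) * (a (matchIdx N p.1) * a (matchIdx N p.2.2)))
      + (∑ p ∈ (S N (n : ℤ)).filter (fun p => matchIdx N p.2.2 = l),
        coef m p (n : ℤ) * (a (matchIdx N p.1) * a (matchIdx N p.2.1))) := by
  rw [fderiv_cubic]
  rw [Finset.sum_filter, Finset.sum_filter, Finset.sum_filter,
    ← Finset.sum_add_distrib, ← Finset.sum_add_distrib]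
  apply Finset.sum_congr rfl
  intro p _
  simp only [Pi.single_apply]
  split_ifs <;> ring

lemma bound1 (y : ℤ) : ∀ p ∈ S N y, -(N:ℤ) ≤ p.1 ∧ p.1 ≤ N := by
  intro p hp; rw [mem_S] at hp; exact hp.1

lemma bound2 (y : ℤ) : ∀ p ∈ S N y, -(N:ℤ) ≤ p.2.1 ∧ p.2.1 ≤ N := by
  intro p hp; rw [mem_S] at hp; exact hp.2.1

lemma bound3 (y : ℤ) : ∀ p ∈ S N y, -(N:ℤ) ≤ p.2.2 ∧ p.2.2 ≤ N := by
  intro p hp; rw [mem_S] at hp; exact hp.2.2.1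

lemma deriv_T (a : Fin (N + 1) → ℝ) (l n : Fin (N + 1)) (hl : l ≠ 0) :
    fderiv ℝ (cubicMatchF m N) a (Pi.single l 1) n =
      (T1 m N a (l : ℤ) (n : ℤ) + T1 m N a (-(l:ℤ)) (n : ℤ))
      + (T2 m N a (l : ℤ) (n : ℤ) + T2 m N a (-(l:ℤ)) (n : ℤ))
      + (T3 m N a (l : ℤ) (n : ℤ) + T3 m N a (-(l:ℤ)) (n : ℤ)) := by
  rw [deriv_split]
  rw [sum_filter_matchIdx N _ _ (bound1 N _) l hl,
    sum_filter_matchIdx N _ _ (bound2 N _) l hl,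
    sum_filter_matchIdx N _ _ (bound3 N _) l hl]
  rfl

lemma deriv_T_zero (a : Fin (N + 1) → ℝ) (n : Fin (N + 1)) :
    fderiv ℝ (cubicMatchF m N) a (Pi.single (0 : Fin (N+1)) 1) n =
      T1 m N a 0 (n : ℤ) + T2 m N a 0 (n : ℤ) + T3 m N a 0 (n : ℤ) := by
  rw [deriv_split]
  rw [sum_filter_matchIdx_zero N _ _ (bound1 N _),
    sum_filter_matchIdx_zero N _ _ (bound2 N _),
    sum_filter_matchIdx_zero N _ _ (bound3 N _)]
  rfl

end CMF

/-- Symmetry of the Jacobian of the cubic matching map: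
`∂_ℓ [C^m_N(a)]_n = ∂_n [C^m_N(a)]_ℓ` for `ℓ, n ∈ {1,…,N}`, and
`∂_n [C^m_N(a)]_0 = 2 ∂_0 [C^m_N(a)]_n` for `n ∈ {1,…,N}`. -/
theorem stmt_13 (m N : ℕ) (a : Fin (N + 1) → ℝ) :
    (∀ l n : Fin (N + 1), l ≠ 0 → n ≠ 0 →
      fderiv ℝ (cubicMatchF m N) a (Pi.single l 1) n
        = fderiv ℝ (cubicMatchF m N) a (Pi.single n 1) l) ∧
    (∀ n : Fin (N + 1), n ≠ 0 →
      fderiv ℝ (cubicMatchF m N) a (Pi.single n 1) 0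
        = 2 * fderiv ℝ (cubicMatchF m N) a (Pi.single 0 1) n) := by
  constructor
  · intro l n hl hn
    rw [CMF.deriv_T m N a l n hl, CMF.deriv_T m N a n l hn]
    have h0l : (0:ℤ) ≤ (l:ℤ) := by positivity
    have hNl : ((l:ℕ):ℤ) ≤ N := by have := l.isLt; omega
    have h0n : (0:ℤ) ≤ (n:ℤ) := by positivity
    have hNn : ((n:ℕ):ℤ) ≤ N := by have := n.isLt; omega
    have e1 := CMF.T1_swap m N a 1 (l:ℤ) (n:ℤ) (Or.inl rfl) h0l hNl h0n hNn
    have e2 := CMF.T1_swap m N a (-1) (l:ℤ) (n:ℤ) (Or.inr rfl) h0l hNl h0n hNn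
    have e3 := CMF.T2_swap m N a 1 (l:ℤ) (n:ℤ) (Or.inl rfl) h0l hNl h0n hNn
    have e4 := CMF.T2_swap m N a (-1) (l:ℤ) (n:ℤ) (Or.inr rfl) h0l hNl h0n hNn
    have e5 := CMF.T3_swap m N a 1 (l:ℤ) (n:ℤ) (Or.inl rfl) h0l hNl h0n hNn
    have e6 := CMF.T3_swap m N a (-1) (l:ℤ) (n:ℤ) (Or.inr rfl) h0l hNl h0n hNn
    simp only [one_mul, neg_one_mul] at e1 e2 e3 e4 e5 e6
    rw [e1, e2, e3, e4, e5, e6]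
  · intro n hn
    have hz : ((0 : Fin (N+1)) : ℤ) = 0 := by simp
    have hT := CMF.deriv_T m N a n 0 hn
    rw [hz] at hT
    rw [hT, CMF.deriv_T_zero m N a n]
    have h0n : (0:ℤ) ≤ (n:ℤ) := by positivity
    have hNn : ((n:ℕ):ℤ) ≤ N := by have := n.isLt; omega
    have hN0 : (0:ℤ) ≤ (N:ℤ) := by positivity
    have e1 := CMF.T1_swap m N a 1 (n:ℤ) 0 (Or.inl rfl) h0n hNn le_rfl hN0
    have e2 := CMF.T1_swap m N a (-1) (n:ℤ) 0 (Or.inr rfl) h0n hNn le_rfl hN0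
    have e3 := CMF.T2_swap m N a 1 (n:ℤ) 0 (Or.inl rfl) h0n hNn le_rfl hN0
    have e4 := CMF.T2_swap m N a (-1) (n:ℤ) 0 (Or.inr rfl) h0n hNn le_rfl hN0
    have e5 := CMF.T3_swap m N a 1 (n:ℤ) 0 (Or.inl rfl) h0n hNn le_rfl hN0
    have e6 := CMF.T3_swap m N a (-1) (n:ℤ) 0 (Or.inr rfl) h0n hNn le_rfl hN0
    simp only [one_mul, neg_one_mul, mul_zero, neg_zero] at e1 e2 e3 e4 e5 e6
    rw [e1, e2, e3, e4, e5, e6]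
    ring
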